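/- arXiv:1304.6593 — 2 statements merged into one kernel-verified Lean document; each statement's English description precedes it below -/
import Mathlib

section
/- Let (V,E) be a multigraph with |V| ≥ 2 and let λ = min { d_E(X) : ∅ ≠ X ⊊ V } be its minimum cut value, and suppose λ is odd. Then the family of minimum cuts is cross-free: for any X, Y with d_E(X) = d_E(Y) = λ, at least one of the following holds: X ⊆ Y, Y ⊆ X, X ∩ Y = ∅, or X ∪ Y = V. -/
open scoped Classical

/-- The number of edges of the edge multiset `Es` (counted with multiplicity)
with exactly one endpoint in `X`. -/
noncomputable def cutDeg {V : Type*} (Es : Multiset (Sym2 V)) (X : Finset V) : ℕ :=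
  Multiset.card (Es.filter (fun e => ∃ u v, e = s(u, v) ∧ u ∈ X ∧ v ∉ X))

section Aux

lemma card_filter_eq_sum' {α} (s : Multiset α) (p : α → Prop) [DecidablePred p] :
    Multiset.card (s.filter p) = (s.map (fun a => if p a then (1:ℕ) else 0)).sum := by
  induction s using Multiset.induction with
  | empty => simp
  | cons a s ih => by_cases h : p a <;> simp [h, ih, Nat.add_comm]

lemma sum_combine {α} (s : Multiset α) (f1 f2 g1 g2 g3 : α → ℕ)
    (h : ∀ a ∈ s, f1 a + f2 a = g1 a + (g2 a + 2 * g3 a)) :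
    (s.map f1).sum + (s.map f2).sum
      = (s.map g1).sum + ((s.map g2).sum + 2 * (s.map g3).sum) := by
  induction s using Multiset.induction with
  | empty => simp
  | cons a s ih =>
    have ha := h a (Multiset.mem_cons_self a s)
    have ih' := ih (fun x hx => h x (Multiset.mem_cons_of_mem hx))
    simp only [Multiset.map_cons, Multiset.sum_cons]
    omega

lemma sum_combine2 {α} (s : Multiset α) (f1 f2 g1 g3 : α → ℕ)
    (h : ∀ a ∈ s, f1 a + f2 a = g1 a + 2 * g3 a) :
    (s.map f1).sum + (s.map f2).sum = (s.map g1).sum + 2 * (s.map g3).sum := by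
  induction s using Multiset.induction with
  | empty => simp
  | cons a s ih =>
    have ha := h a (Multiset.mem_cons_self a s)
    have ih' := ih (fun x hx => h x (Multiset.mem_cons_of_mem hx))
    simp only [Multiset.map_cons, Multiset.sum_cons]
    omega

variable {V : Type*} [DecidableEq V]

lemma cross_iff' (Z : Finset V) (a b : V) :
    (∃ u v, s(a,b) = s(u,v) ∧ u ∈ Z ∧ v ∉ Z) ↔ ((a∈Z ∧ b∉Z) ∨ (b∈Z ∧ a∉Z)) := by
  constructor
  · rintro ⟨u,v,h,hu,hv⟩
    rw [Sym2.eq_iff] at h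
    rcases h with ⟨rfl,rfl⟩|⟨rfl,rfl⟩
    · exact Or.inl ⟨hu, hv⟩
    · exact Or.inr ⟨hu, hv⟩
  · rintro (⟨h1,h2⟩|⟨h1,h2⟩)
    · exact ⟨a, b, rfl, h1, h2⟩
    · exact ⟨b, a, Sym2.eq_swap, h1, h2⟩

lemma sep_iff' (P Q : Finset V) (a b : V) :
    (∃ u v, s(a,b) = s(u,v) ∧ u ∈ P ∧ v ∈ Q) ↔ ((a∈P ∧ b∈Q) ∨ (b∈P ∧ a∈Q)) := by
  constructor
  · rintro ⟨u,v,h,hu,hv⟩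
    rw [Sym2.eq_iff] at h
    rcases h with ⟨rfl,rfl⟩|⟨rfl,rfl⟩
    · exact Or.inl ⟨hu, hv⟩
    · exact Or.inr ⟨hu, hv⟩
  · rintro (⟨h1,h2⟩|⟨h1,h2⟩)
    · exact ⟨a, b, rfl, h1, h2⟩
    · exact ⟨b, a, Sym2.eq_swap, h1, h2⟩

/-- Number of edges of `E` with one endpoint in `P` and the other in `Q`. -/
noncomputable def sepCount (E : Multiset (Sym2 V)) (P Q : Finset V) : ℕ :=
  Multiset.card (E.filter (fun e => ∃ u v, e = s(u, v) ∧ u ∈ P ∧ v ∈ Q))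

lemma cutDeg_eq_sum (E : Multiset (Sym2 V)) (Z : Finset V) :
    cutDeg E Z = (E.map (fun e =>
      if (∃ u v, e = s(u,v) ∧ u ∈ Z ∧ v ∉ Z) then (1:ℕ) else 0)).sum :=
  card_filter_eq_sum' _ _

lemma sepCount_eq_sum (E : Multiset (Sym2 V)) (P Q : Finset V) :
    sepCount E P Q = (E.map (fun e =>
      if (∃ u v, e = s(u,v) ∧ u ∈ P ∧ v ∈ Q) then (1:ℕ) else 0)).sum :=
  card_filter_eq_sum' _ _

lemma cutDeg_submod (E : Multiset (Sym2 V)) (X Y : Finset V) :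
    cutDeg E X + cutDeg E Y =
      cutDeg E (X ∩ Y) + (cutDeg E (X ∪ Y) + 2 * sepCount E (X \ Y) (Y \ X)) := by
  rw [cutDeg_eq_sum, cutDeg_eq_sum, cutDeg_eq_sum, cutDeg_eq_sum, sepCount_eq_sum,
]
  refine sum_combine E _ _ _ _ _ ?_
  intro e _
  induction e using Sym2.ind with
  | _ a b =>
    simp only [cross_iff', sep_iff']
    by_cases haX : a ∈ X <;> by_cases hbX : b ∈ X <;> by_cases haY : a ∈ Y <;>
      by_cases hbY : b ∈ Y <;>
      simp [Finset.mem_inter, Finset.mem_union, Finset.mem_sdiff, haX, hbX, haY, hbY]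

lemma cutDeg_submod' [Fintype V] (E : Multiset (Sym2 V)) (X Y : Finset V) :
    cutDeg E X + cutDeg E Y =
      cutDeg E (X \ Y) + (cutDeg E (Y \ X) + 2 * sepCount E (X ∩ Y) ((X ∪ Y)ᶜ)) := by
  rw [cutDeg_eq_sum, cutDeg_eq_sum, cutDeg_eq_sum, cutDeg_eq_sum, sepCount_eq_sum,
]
  refine sum_combine E _ _ _ _ _ ?_
  intro e _
  induction e using Sym2.ind with
  | _ a b =>
    simp only [cross_iff', sep_iff']
    by_cases haX : a ∈ X <;> by_cases hbX : b ∈ X <;> by_cases haY : a ∈ Y <;>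
      by_cases hbY : b ∈ Y <;>
      simp [Finset.mem_inter, Finset.mem_union, Finset.mem_sdiff, Finset.mem_compl,
        haX, hbX, haY, hbY]

lemma cutDeg_parity (E : Multiset (Sym2 V)) (X Y : Finset V) :
    cutDeg E (X ∩ Y) + cutDeg E (X \ Y) = cutDeg E X + 2 * sepCount E (X ∩ Y) (X \ Y) := by
  rw [cutDeg_eq_sum, cutDeg_eq_sum, cutDeg_eq_sum, sepCount_eq_sum,
]
  refine sum_combine2 E _ _ _ _ ?_
  intro e _
  induction e using Sym2.ind with
  | _ a b =>
    simp only [cross_iff', sep_iff']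
    by_cases haX : a ∈ X <;> by_cases hbX : b ∈ X <;> by_cases haY : a ∈ Y <;>
      by_cases hbY : b ∈ Y <;>
      simp [Finset.mem_inter, Finset.mem_sdiff, haX, hbX, haY, hbY]

end Aux

/-- If the minimum cut value `lam` of a multigraph is odd, then the family of minimum
cuts is cross-free: any two minimum cuts `X`, `Y` satisfy `X ⊆ Y`, `Y ⊆ X`,
`X ∩ Y = ∅` or `X ∪ Y = V`. -/
theorem minCuts_crossFree_of_odd {V : Type*} [Fintype V] [DecidableEq V]
    (E : Multiset (Sym2 V)) (hE : ∀ e ∈ E, ¬ e.IsDiag)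
    (hV : 2 ≤ Fintype.card V) (lam : ℕ)
    (hlam : IsLeast {n : ℕ | ∃ X : Finset V, X ≠ ∅ ∧ X ≠ Finset.univ ∧
      cutDeg E X = n} lam)
    (hodd : Odd lam)
    (X Y : Finset V) (hX : cutDeg E X = lam) (hY : cutDeg E Y = lam) :
    X ⊆ Y ∨ Y ⊆ X ∨ X ∩ Y = ∅ ∨ X ∪ Y = Finset.univ := by
  by_contra hcon
  push_neg at hcon
  obtain ⟨hXY, hYX, hInt, hUn⟩ := hcon
  obtain ⟨b, hbX, hbY⟩ := Finset.not_subset.mp hXY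
  obtain ⟨c, hcY, hcX⟩ := Finset.not_subset.mp hYX
  obtain ⟨a, ha⟩ := hInt
  have haX : a ∈ X := (Finset.mem_inter.mp ha).1
  have haY : a ∈ Y := (Finset.mem_inter.mp ha).2
  have hmin : ∀ Z : Finset V, Z ≠ ∅ → Z ≠ Finset.univ → lam ≤ cutDeg E Z :=
    fun Z h1 h2 => hlam.2 ⟨Z, h1, h2, rfl⟩
  have hne_univ : ∀ (Z : Finset V) (x : V), x ∉ Z → Z ≠ Finset.univ := by
    intro Z x hx h
    rw [h] at hx
    exact hx (Finset.mem_univ x)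
  -- lower bounds for the four corner sets
  have hA : lam ≤ cutDeg E (X ∩ Y) := by
    refine hmin _ (Finset.ne_empty_of_mem ha) (hne_univ _ c ?_)
    simp [Finset.mem_inter, hcX]
  have hU : lam ≤ cutDeg E (X ∪ Y) := by
    refine hmin _ (Finset.ne_empty_of_mem (Finset.mem_union_left _ haX)) hUn
  have hB : lam ≤ cutDeg E (X \ Y) := by
    refine hmin _ (Finset.ne_empty_of_mem (Finset.mem_sdiff.mpr ⟨hbX, hbY⟩)) (hne_univ _ a ?_)
    simp [Finset.mem_sdiff, haY]
  have hC : lam ≤ cutDeg E (Y \ X) := by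
    refine hmin _ (Finset.ne_empty_of_mem (Finset.mem_sdiff.mpr ⟨hcY, hcX⟩)) (hne_univ _ a ?_)
    simp [Finset.mem_sdiff, haX]
  have h1 := cutDeg_submod E X Y
  have h2 := cutDeg_submod' E X Y
  have h3 := cutDeg_parity E X Y
  obtain ⟨k, hk⟩ := hodd
  omega
end

section
/- Let (V,E) be a forest with connected components (V₁,E₁), …, (V_r,E_r), r ≥ 2, equipped with a metric weighted link instance with parameter p (with respect to a fixed choice of the selector nodes S_t(u,V_j)), and let u be a leaf of (V₁,E₁). If there exists at least one feasible solution, then there exists an optimal feasible solution F such that for every link (u,v,t) ∈ F incident to u, the node v belongs to R ∪ S_u, where R is the set of nodes whose degree in the forest is not equal to 2, and S_u = { S_t(u,V_j) : 1 ≤ t ≤ p, j ≠ 1 }. -/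
open scoped Classical ENNReal

/-- The multigraph `(V, Es)` is `k`-edge-connected. -/
def KEdgeConnected {V : Type*} [Fintype V] (Es : Multiset (Sym2 V)) (k : ℕ) : Prop :=
  2 ≤ Fintype.card V ∧
    ∀ X : Finset V, X ≠ ∅ → X ≠ Finset.univ → k ≤ cutDeg Es X

/-- `e` is an edge of the (unique) `a`–`b` path in the graph `G`: `a` and `b` are in
the same component and every `a`–`b` walk traverses `e`.  (In a forest this says that
`e` lies on the unique path `P(a,b)` inside the common component of `a` and `b`.) -/
def OnPath {V : Type*} (G : SimpleGraph V) (a b : V) (e : Sym2 V) : Prop :=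
  G.Reachable a b ∧ ∀ w : G.Walk a b, e ∈ w.edges

/-- A link `(u, v, t)` is valid for parameter `p`. -/
def ValidLink {V : Type*} (p : ℕ) (l : V × V × ℕ) : Prop :=
  l.1 ≠ l.2.1 ∧ 1 ≤ l.2.2 ∧ l.2.2 ≤ p

/-- The link `f` is a shadow of the link `e` (with respect to the selector `sel`):
either `f = e`; or both are internal links of the same component with `w(f) ≥ w(e)`
and `P(f) ⊆ P(e)`; or both are foliate external links at a common leaf, with the other
endpoints in a common component `K`, `w(f) ≥ w(e)` and `P(f) ⊆ P(e)`, where the path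
of a foliate link `(u, x, t)` is the path from `x` to the selector node `sel u K t`. -/
def IsShadowF {V : Type*} [Fintype V] (G : SimpleGraph V) [DecidableRel G.Adj]
    (sel : V → G.ConnectedComponent → ℕ → V) (f e : V × V × ℕ) : Prop :=
  f = e ∨
  (G.Reachable e.1 e.2.1 ∧ G.Reachable f.1 f.2.1 ∧ G.Reachable e.1 f.1 ∧
    e.2.2 ≤ f.2.2 ∧ ∀ ed : Sym2 V, OnPath G f.1 f.2.1 ed → OnPath G e.1 e.2.1 ed) ∨
  (e.1 = f.1 ∧ G.degree e.1 = 1 ∧ ¬ G.Reachable e.1 e.2.1 ∧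
    G.Reachable e.2.1 f.2.1 ∧ e.2.2 ≤ f.2.2 ∧
    ∀ ed : Sym2 V,
      OnPath G f.2.1 (sel e.1 (G.connectedComponentMk e.2.1) f.2.2) ed →
      OnPath G e.2.1 (sel e.1 (G.connectedComponentMk e.2.1) e.2.2) ed)

/-- The weighted link instance `c` with parameter `p` on the forest `G` is metric
(with respect to the fixed selector choice `sel`): shadows are no more expensive, and
the triangle inequalities hold. -/
def IsMetricForestInstance {V : Type*} [Fintype V] (G : SimpleGraph V)
    [DecidableRel G.Adj] (sel : V → G.ConnectedComponent → ℕ → V) (p : ℕ)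
    (c : V → V → ℕ → ℝ≥0∞) : Prop :=
  (∀ e f : V × V × ℕ, ValidLink p e → ValidLink p f → IsShadowF G sel f e →
      c f.1 f.2.1 f.2.2 ≤ c e.1 e.2.1 e.2.2) ∧
  (∀ u v z : V, ∀ t₁ t₂ t₃ : ℕ, u ≠ v → v ≠ z → u ≠ z →
      1 ≤ t₁ → 1 ≤ t₂ → t₃ ≤ p → t₁ + t₂ ≤ t₃ →
      c u z t₃ ≤ c u v t₁ + c v z t₂)

/-- A solution (multiset of links) is feasible: all links are valid, the total weight
is at most `p`, and adding the links to the forest yields a 2-edge-connected graph. -/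
def FeasibleF {V : Type*} [Fintype V] (G : SimpleGraph V) [DecidableRel G.Adj]
    (p : ℕ) (F : Multiset (V × V × ℕ)) : Prop :=
  (∀ l ∈ F, ValidLink p l) ∧ (F.map (fun l => l.2.2)).sum ≤ p ∧
    KEdgeConnected (G.edgeFinset.val + F.map (fun l => s(l.1, l.2.1))) 2

/-- The total cost of a solution. -/
noncomputable def solCost {V : Type*} (c : V → V → ℕ → ℝ≥0∞)
    (F : Multiset (V × V × ℕ)) : ℝ≥0∞ :=
  (F.map (fun l => c l.1 l.2.1 l.2.2)).sum

set_option linter.unusedSectionVars false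
section FAPaux
open Multiset SimpleGraph

variable {V : Type*} [Fintype V] [DecidableEq V]

def Pc (X : Finset V) (e : Sym2 V) : Prop := ∃ u v, e = s(u, v) ∧ u ∈ X ∧ v ∉ X

lemma cutDeg_eq (Es : Multiset (Sym2 V)) (X : Finset V) :
    cutDeg Es X = Multiset.card (Es.filter (Pc X)) := rfl

lemma Pc_iff {X : Finset V} {a b : V} :
    Pc X s(a, b) ↔ (a ∈ X ∧ b ∉ X) ∨ (b ∈ X ∧ a ∉ X) := by
  constructor
  · rintro ⟨x, y, he, hx, hy⟩
    rw [Sym2.eq_iff] at he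
    rcases he with ⟨rfl, rfl⟩ | ⟨rfl, rfl⟩
    · exact Or.inl ⟨hx, hy⟩
    · exact Or.inr ⟨hx, hy⟩
  · rintro (⟨hx, hy⟩ | ⟨hx, hy⟩)
    · exact ⟨a, b, rfl, hx, hy⟩
    · exact ⟨b, a, Sym2.eq_swap, hx, hy⟩

lemma cutDeg_add (A B : Multiset (Sym2 V)) (X : Finset V) :
    cutDeg (A + B) X = cutDeg A X + cutDeg B X := by
  rw [cutDeg_eq, cutDeg_eq, cutDeg_eq, Multiset.filter_add, Multiset.card_add]

lemma cutDeg_cons (e : Sym2 V) (A : Multiset (Sym2 V)) (X : Finset V) :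
    cutDeg (e ::ₘ A) X = (if Pc X e then 1 else 0) + cutDeg A X := by
  rw [cutDeg_eq, Multiset.filter_cons, Multiset.card_add, cutDeg_eq]
  congr 1
  split <;> simp

lemma Pc_compl {X : Finset V} {e : Sym2 V} : Pc Xᶜ e ↔ Pc X e := by
  induction e using Sym2.ind with
  | _ a b =>
    rw [Pc_iff, Pc_iff]
    simp only [Finset.mem_compl, not_not]
    tauto

lemma cutDeg_compl (A : Multiset (Sym2 V)) (X : Finset V) :
    cutDeg A Xᶜ = cutDeg A X := by
  rw [cutDeg_eq, cutDeg_eq]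
  congr 1
  apply Multiset.filter_congr
  intro e _
  exact Pc_compl

variable (G : SimpleGraph V) [DecidableRel G.Adj]

lemma edge_ex {e : Sym2 V} (he : e ∈ G.edgeFinset.val) :
    ∃ a b, e = s(a, b) ∧ G.Adj a b := by
  induction e using Sym2.ind with
  | _ a b =>
    refine ⟨a, b, rfl, ?_⟩
    rw [← SimpleGraph.mem_edgeSet, ← SimpleGraph.mem_edgeFinset]
    exact he

lemma card_le_one_of_all_eq {s : Multiset (Sym2 V)} (hn : s.Nodup) (a : Sym2 V)
    (h : ∀ x ∈ s, x = a) : Multiset.card s ≤ 1 := by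
  have hrep : s = Multiset.replicate (Multiset.card s) a := Multiset.eq_replicate_card.mpr h
  have hcount : Multiset.count a s ≤ 1 := Multiset.nodup_iff_count_le_one.mp hn a
  have : Multiset.count a s = Multiset.card s := by
    conv_lhs => rw [hrep]
    simp
  omega

lemma onPath_symm {a b : V} {e : Sym2 V} (h : OnPath G a b e) : OnPath G b a e := by
  refine ⟨h.1.symm, fun w => ?_⟩
  have := h.2 w.reverse
  simpa [SimpleGraph.Walk.edges_reverse] using this

lemma exists_step {v w : V} (hr : G.Reachable v w) (hne : v ≠ w) :
    ∃ v₁, G.Adj v v₁ ∧ G.dist v₁ w < G.dist v w ∧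
      (∀ ed, OnPath G v₁ w ed → OnPath G v w ed) := by
  obtain ⟨pw, hpath, hlen⟩ := hr.exists_path_of_dist
  cases pw with
  | nil => exact absurd rfl hne
  | @cons _ v₁ _ hadj q =>
    rw [SimpleGraph.Walk.cons_isPath_iff] at hpath
    have hvq : v ∉ q.support := hpath.2
    refine ⟨v₁, hadj, ?_, ?_⟩
    · have h1 : G.dist v₁ w ≤ q.length := SimpleGraph.dist_le q
      have h2 : q.length + 1 = G.dist v w := by
        simpa [SimpleGraph.Walk.length_cons] using hlen
      omega
    · intro ed hed
      refine ⟨hr, ?_⟩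
      intro wk
      have h3 := hed.2 (SimpleGraph.Walk.cons hadj.symm wk)
      rw [SimpleGraph.Walk.edges_cons] at h3
      rcases List.mem_cons.mp h3 with h4 | h4
      · exfalso
        have h5 := hed.2 q
        rw [h4] at h5
        exact hvq (SimpleGraph.Walk.snd_mem_support_of_mem_edges q h5)
      · exact h4

lemma deg_two {v v₁ : V} (hdeg : G.degree v = 2) (h1 : G.Adj v v₁) :
    ∃ v₂, G.Adj v v₂ ∧ v₂ ≠ v₁ ∧ ∀ z, G.Adj v z → z = v₁ ∨ z = v₂ := by
  have hc : (G.neighborFinset v).card = 2 := by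
    rw [G.card_neighborFinset_eq_degree]; exact hdeg
  have hm : v₁ ∈ G.neighborFinset v := (G.mem_neighborFinset v v₁).mpr h1
  obtain ⟨a, b, hab, hset⟩ := Finset.card_eq_two.mp hc
  rw [hset] at hm
  rcases Finset.mem_insert.mp hm with rfl | hm
  · refine ⟨b, ?_, ?_, ?_⟩
    · have : b ∈ G.neighborFinset v := by rw [hset]; simp
      exact (G.mem_neighborFinset v b).mp this
    · exact fun hb => hab hb.symm
    · intro z hz
      have : z ∈ G.neighborFinset v := (G.mem_neighborFinset v z).mpr hz
      rw [hset] at this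
      rcases Finset.mem_insert.mp this with rfl | hz'
      · exact Or.inl rfl
      · exact Or.inr (Finset.mem_singleton.mp hz')
  · rw [Finset.mem_singleton] at hm
    subst hm
    refine ⟨a, ?_, hab, ?_⟩
    · have : a ∈ G.neighborFinset v := by rw [hset]; simp
      exact (G.mem_neighborFinset v a).mp this
    · intro z hz
      have : z ∈ G.neighborFinset v := (G.mem_neighborFinset v z).mpr hz
      rw [hset] at this
      rcases Finset.mem_insert.mp this with rfl | hz'
      · exact Or.inr rfl
      · exact Or.inl (Finset.mem_singleton.mp hz')

lemma dist_le_card (a b : V) : G.dist a b ≤ Fintype.card V := by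
  by_cases hr : G.Reachable a b
  · obtain ⟨pw, hpath, hlen⟩ := hr.exists_path_of_dist
    have := hpath.length_lt
    omega
  · rw [SimpleGraph.dist_eq_zero_of_not_reachable hr]
    exact Nat.zero_le _

end FAPaux

section FAPmain
open Multiset SimpleGraph
set_option linter.unusedSectionVars false
variable {V : Type*} [Fintype V] [DecidableEq V] (G : SimpleGraph V) [DecidableRel G.Adj] (p : ℕ)

lemma edge_mem {a b : V} (h : G.Adj a b) : s(a, b) ∈ G.edgeFinset.val :=
  Finset.mem_val.mpr (SimpleGraph.mem_edgeFinset.mpr ((G.mem_edgeSet).mpr h))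

lemma cutDeg_split (F : Multiset (V × V × ℕ)) (X : Finset V) :
    cutDeg (G.edgeFinset.val + F.map (fun l => s(l.1, l.2.1))) X
      = Multiset.card ((G.edgeFinset.val).filter (Pc X))
        + Multiset.card (F.filter (fun l => Pc X s(l.1, l.2.1))) := by
  rw [cutDeg_add, cutDeg_eq, cutDeg_eq, Multiset.filter_map, Multiset.card_map]
  congr 1

lemma pair_le_card {α : Type*} [DecidableEq α] {a b : α} {s : Multiset α}
    (ha : a ∈ s) (hb : b ∈ s) (hab : a ≠ b) : 2 ≤ Multiset.card s := by
  have h : ({a, b} : Multiset α) ≤ s := by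
    rw [Multiset.le_iff_count]
    intro x
    by_cases hxa : x = a
    · subst hxa
      have : Multiset.count x ({x, b} : Multiset α) = 1 := by
        simp [Multiset.count_cons, Multiset.count_singleton, hab]
      rw [this]
      exact Multiset.one_le_count_iff_mem.mpr ha
    · by_cases hxb : x = b
      · subst hxb
        have : Multiset.count x ({a, x} : Multiset α) = 1 := by
          simp [Multiset.count_cons, Multiset.count_singleton, Ne.symm hxa]
        rw [this]
        exact Multiset.one_le_count_iff_mem.mpr hb
      · have : Multiset.count x ({a, b} : Multiset α) = 0 := by
          simp [Multiset.count_cons, Multiset.count_singleton, hxa, hxb]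
        rw [this]
        exact Nat.zero_le _
  calc 2 = Multiset.card ({a, b} : Multiset α) := by simp
    _ ≤ Multiset.card s := Multiset.card_le_card h

lemma Xstruct (F : Multiset (V × V × ℕ)) (hF : FeasibleF G p F)
    {u v v₁ v₂ : V} {t : ℕ}
    (hl : (u, v, t) ∈ F) (h1 : G.Adj v v₁) (h2 : G.Adj v v₂) (h21 : v₂ ≠ v₁)
    (hnbr : ∀ z, G.Adj v z → z = v₁ ∨ z = v₂)
    {X : Finset V} (hvX : v ∈ X) (huX : u ∉ X) (hv1X : v₁ ∉ X)
    (hcut : cutDeg (G.edgeFinset.val + F.map (fun l => s(l.1, l.2.1))) X ≤ 2) :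
    ∃ (e₂ : V × V × ℕ) (y : V) (t₂ : ℕ),
      e₂ ∈ F ∧ e₂ ≠ (u, v, t) ∧ (e₂ = (v, y, t₂) ∨ e₂ = (y, v, t₂)) ∧
      y ∈ X ∧ y ≠ u ∧ y ≠ v ∧
      (∀ e ∈ G.edgeFinset.val, Pc X e → e = s(v, v₁)) ∧
      (∀ e ∈ F, Pc X s(e.1, e.2.1) → e = (u, v, t)) ∧
      F.count (u, v, t) = 1 := by
  have hXne : X ≠ ∅ := by
    intro h; rw [h] at hvX; exact absurd hvX (Finset.notMem_empty v)
  have hXuniv : X ≠ Finset.univ := by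
    intro h; rw [h] at huX; exact huX (Finset.mem_univ u)
  have h2cut := hF.2.2.2 X hXne hXuniv
  have heq : cutDeg (G.edgeFinset.val + F.map (fun l => s(l.1, l.2.1))) X = 2 :=
    le_antisymm hcut h2cut
  rw [cutDeg_split] at heq
  have hA1 : s(v, v₁) ∈ (G.edgeFinset.val).filter (Pc X) :=
    Multiset.mem_filter.mpr ⟨edge_mem G h1, Pc_iff.mpr (Or.inl ⟨hvX, hv1X⟩)⟩
  have hB1 : (u, v, t) ∈ F.filter (fun l => Pc X s(l.1, l.2.1)) :=
    Multiset.mem_filter.mpr ⟨hl, Pc_iff.mpr (Or.inr ⟨hvX, huX⟩)⟩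
  have hAcard : 1 ≤ Multiset.card ((G.edgeFinset.val).filter (Pc X)) :=
    Multiset.card_pos_iff_exists_mem.mpr ⟨_, hA1⟩
  have hBcard : 1 ≤ Multiset.card (F.filter (fun l => Pc X s(l.1, l.2.1))) :=
    Multiset.card_pos_iff_exists_mem.mpr ⟨_, hB1⟩
  have hAone : Multiset.card ((G.edgeFinset.val).filter (Pc X)) = 1 := by omega
  have hBone : Multiset.card (F.filter (fun l => Pc X s(l.1, l.2.1))) = 1 := by omega
  obtain ⟨ea, hea⟩ := Multiset.card_eq_one.mp hAone
  obtain ⟨eb, heb⟩ := Multiset.card_eq_one.mp hBone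
  have heaeq : ea = s(v, v₁) := by
    rw [hea] at hA1; exact (Multiset.mem_singleton.mp hA1).symm
  have hebeq : eb = (u, v, t) := by
    rw [heb] at hB1; exact (Multiset.mem_singleton.mp hB1).symm
  subst heaeq; subst hebeq
  have hXtree : ∀ e ∈ G.edgeFinset.val, Pc X e → e = s(v, v₁) := by
    intro e he hPc
    have : e ∈ (G.edgeFinset.val).filter (Pc X) := Multiset.mem_filter.mpr ⟨he, hPc⟩
    rw [hea] at this
    exact Multiset.mem_singleton.mp this
  have hXF : ∀ e ∈ F, Pc X s(e.1, e.2.1) → e = (u, v, t) := by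
    intro e he hPc
    have : e ∈ F.filter (fun l => Pc X s(l.1, l.2.1)) := Multiset.mem_filter.mpr ⟨he, hPc⟩
    rw [heb] at this
    exact Multiset.mem_singleton.mp this
  have hcount : F.count (u, v, t) = 1 := by
    have h : Multiset.count (u, v, t) (F.filter (fun l => Pc X s(l.1, l.2.1)))
        = Multiset.count (u, v, t) F := by
      rw [Multiset.count_filter, if_pos (Pc_iff.mpr (Or.inr ⟨hvX, huX⟩))]
    rw [heb, Multiset.count_singleton, if_pos rfl] at h
    omega
  have hvv1 : v ≠ v₁ := G.ne_of_adj h1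
  have hvv2 : v ≠ v₂ := G.ne_of_adj h2
  have hv2X : v₂ ∈ X := by
    by_contra hv2X
    have := hXtree s(v, v₂) (edge_mem G h2) (Pc_iff.mpr (Or.inl ⟨hvX, hv2X⟩))
    rw [Sym2.eq_iff] at this
    rcases this with ⟨_, h'⟩ | ⟨h', _⟩
    · exact h21 h'
    · exact hvv1 h'
  -- the cut Z = X.erase v
  set Z := X.erase v with hZ
  have hv2Z : v₂ ∈ Z := Finset.mem_erase.mpr ⟨hvv2.symm, hv2X⟩
  have hvZ : v ∉ Z := Finset.notMem_erase v X
  have hZne : Z ≠ ∅ := by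
    intro h; rw [h] at hv2Z; exact absurd hv2Z (Finset.notMem_empty v₂)
  have hZuniv : Z ≠ Finset.univ := by
    intro h; rw [h] at hvZ; exact hvZ (Finset.mem_univ v)
  have hZcut := hF.2.2.2 Z hZne hZuniv
  rw [cutDeg_split] at hZcut
  have hZmem : ∀ z, z ∈ Z ↔ z ≠ v ∧ z ∈ X := fun z => Finset.mem_erase
  have hu2Z : u ∉ Z := fun h => huX ((hZmem u).mp h).2
  have hv1Z : v₁ ∉ Z := fun h => hv1X ((hZmem v₁).mp h).2
  -- every tree edge crossing Z equals s(v, v₂)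
  have hAZ : ∀ e ∈ (G.edgeFinset.val).filter (Pc Z), e = s(v, v₂) := by
    intro e he
    obtain ⟨heE, hPcZ⟩ := Multiset.mem_filter.mp he
    obtain ⟨a, b, rfl, hadj⟩ := edge_ex G heE
    have key : ∀ xx yy : V, s(xx, yy) = s(a, b) → xx ∈ Z → yy ∉ Z → s(a, b) = s(v, v₂) := by
      intro xx yy hxy hxZ hyZ
      have hyv : yy = v := by
        by_contra hyv
        have hyX : yy ∉ X := fun hyX => hyZ ((hZmem yy).mpr ⟨hyv, hyX⟩)
        have hxX : xx ∈ X := ((hZmem xx).mp hxZ).2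
        have := hXtree s(a, b) heE (by
          rw [← hxy]; exact Pc_iff.mpr (Or.inl ⟨hxX, hyX⟩))
        rw [← hxy, Sym2.eq_iff] at this
        rcases this with ⟨hx', _⟩ | ⟨hx', _⟩
        · exact ((hZmem xx).mp hxZ).1 hx'
        · exact hv1Z (hx' ▸ hxZ)
      have hadjx : G.Adj v xx := by
        have hmem : s(xx, v) ∈ G.edgeSet := by
          rw [← hyv, hxy]; exact (G.mem_edgeSet).mpr hadj
        exact ((G.mem_edgeSet).mp hmem).symm
      rcases hnbr xx hadjx with rfl | rfl
      · exact absurd hxZ hv1Z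
      · rw [← hxy, ← hyv]; exact Sym2.eq_swap
    rw [Pc_iff] at hPcZ
    rcases hPcZ with ⟨haZ, hbZ⟩ | ⟨hbZ, haZ⟩
    · exact key a b rfl haZ hbZ
    · exact key b a Sym2.eq_swap hbZ haZ
  have hAZcard : Multiset.card ((G.edgeFinset.val).filter (Pc Z)) ≤ 1 :=
    card_le_one_of_all_eq (Multiset.Nodup.filter _ (G.edgeFinset.nodup)) _ hAZ
  have hBZcard : 1 ≤ Multiset.card (F.filter (fun l => Pc Z s(l.1, l.2.1))) := by omega
  obtain ⟨e₂, he₂⟩ := Multiset.card_pos_iff_exists_mem.mp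
    (show 0 < Multiset.card (F.filter (fun l => Pc Z s(l.1, l.2.1))) by omega)
  obtain ⟨he₂F, hPcZ2⟩ := Multiset.mem_filter.mp he₂
  -- e₂ is a link at v with other endpoint in Z
  rw [Pc_iff] at hPcZ2
  have hnel : e₂ ≠ (u, v, t) := by
    intro h
    rw [h] at hPcZ2
    simp only at hPcZ2
    rcases hPcZ2 with ⟨h', _⟩ | ⟨h', _⟩
    · exact hu2Z h'
    · exact hvZ h'
  rcases hPcZ2 with ⟨hxZ, hyZ⟩ | ⟨hyZ, hxZ⟩
  · -- e₂.1 ∈ Z, e₂.2.1 ∉ Z ; show e₂.2.1 = v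
    have hyv : e₂.2.1 = v := by
      by_contra hyv
      have hyX : e₂.2.1 ∉ X := fun hyX => hyZ ((hZmem _).mpr ⟨hyv, hyX⟩)
      have hxX : e₂.1 ∈ X := ((hZmem _).mp hxZ).2
      have := hXF e₂ he₂F (Pc_iff.mpr (Or.inl ⟨hxX, hyX⟩))
      rw [this] at hxZ
      exact hu2Z hxZ
    refine ⟨e₂, e₂.1, e₂.2.2, he₂F, hnel, Or.inr ?_, ((hZmem _).mp hxZ).2,
      fun h => huX (h ▸ ((hZmem _).mp hxZ).2), ((hZmem _).mp hxZ).1, hXtree, hXF, hcount⟩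
    rw [← hyv]
  · -- e₂.2.1 ∈ Z, e₂.1 ∉ Z ; show e₂.1 = v
    have hyv : e₂.1 = v := by
      by_contra hyv
      have hyX : e₂.1 ∉ X := fun hyX => hxZ ((hZmem _).mpr ⟨hyv, hyX⟩)
      have hxX : e₂.2.1 ∈ X := ((hZmem _).mp hyZ).2
      have := hXF e₂ he₂F (Pc_iff.mpr (Or.inr ⟨hxX, hyX⟩))
      rw [this] at hyZ
      have : v ∈ Z := by simpa using hyZ
      exact hvZ this
    refine ⟨e₂, e₂.2.1, e₂.2.2, he₂F, hnel, Or.inl ?_, ((hZmem _).mp hyZ).2,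
      fun h => huX (h ▸ ((hZmem _).mp hyZ).2), ((hZmem _).mp hyZ).1, hXtree, hXF, hcount⟩
    rw [← hyv]


lemma le_erase_of_notmem {α : Type*} [DecidableEq α] {s t : Multiset α} {a : α}
    (h : s ≤ t) (ha : a ∉ s) : s ≤ t.erase a := by
  rw [Multiset.le_iff_count]
  intro x
  by_cases hx : x = a
  · subst hx
    rw [Multiset.count_eq_zero_of_notMem ha]
    exact Nat.zero_le _
  · rw [Multiset.count_erase_of_ne hx]
    exact Multiset.count_le_of_le x h

lemma filter_le_of_imp {α : Type*} (s : Multiset α) (p q : α → Prop)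
    [DecidablePred p] [DecidablePred q] (h : ∀ x ∈ s, p x → q x) :
    s.filter p ≤ s.filter q := by
  have h1 : s.filter p = (s.filter q).filter p := by
    rw [Multiset.filter_filter]
    exact Multiset.filter_congr (fun x hx => ⟨fun hp => ⟨hp, h x hx hp⟩, fun hpq => hpq.1⟩)
  rw [h1]
  exact Multiset.filter_le _ _

lemma no_deficient (F : Multiset (V × V × ℕ)) (hF : FeasibleF G p F)
    {u v v₁ y : V} {t : ℕ} {e₂ : V × V × ℕ}
    (hl : (u, v, t) ∈ F) (hcl : F.count (u, v, t) = 1)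
    (he₂F : e₂ ∈ F) (hne2 : e₂ ≠ (u, v, t)) (hfe₂ : s(e₂.1, e₂.2.1) = s(v, y))
    (hadj1 : G.Adj v v₁)
    {X : Finset V} (hvX : v ∈ X) (huX : u ∉ X) (hv1X : v₁ ∉ X) (hyX : y ∈ X)
    (hXtree : ∀ e ∈ G.edgeFinset.val, Pc X e → e = s(v, v₁))
    (hXF : ∀ e ∈ F, Pc X s(e.1, e.2.1) → e = (u, v, t))
    {W : Finset V} (hvW : v ∈ W) (huW : u ∉ W) (hyW : y ∉ W)
    (hW : cutDeg (G.edgeFinset.val + F.map (fun l => s(l.1, l.2.1))) W ≤ 3) : False := by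
  classical
  set M : Finset V := X \ W with hM
  set Q : Finset V := X ∪ W with hQdef
  have hyM : y ∈ M := Finset.mem_sdiff.mpr ⟨hyX, hyW⟩
  have hvM : v ∉ M := fun h => (Finset.mem_sdiff.mp h).2 hvW
  have huM : u ∉ M := fun h => huX (Finset.mem_sdiff.mp h).1
  have hv1M : v₁ ∉ M := fun h => hv1X (Finset.mem_sdiff.mp h).1
  have hvQ : v ∈ Q := Finset.mem_union_left _ hvX
  have huQ : u ∉ Q := fun h => (Finset.mem_union.mp h).elim huX huW
  have hMne : M ≠ ∅ := by
    intro h; rw [h] at hyM; exact absurd hyM (Finset.notMem_empty y)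
  have hMuniv : M ≠ Finset.univ := by
    intro h; rw [h] at hvM; exact hvM (Finset.mem_univ v)
  have hQne : Q ≠ ∅ := by
    intro h; rw [h] at hvQ; exact absurd hvQ (Finset.notMem_empty v)
  have hQuniv : Q ≠ Finset.univ := by
    intro h; rw [h] at huQ; exact huQ (Finset.mem_univ u)
  have hMcut := hF.2.2.2 M hMne hMuniv
  have hQcut := hF.2.2.2 Q hQne hQuniv
  rw [cutDeg_split] at hMcut hQcut hW
  have hlW : (u, v, t) ∈ F.filter (fun l => Pc W s(l.1, l.2.1)) :=
    Multiset.mem_filter.mpr ⟨hl, Pc_iff.mpr (Or.inr ⟨hvW, huW⟩)⟩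
  have he₂W : e₂ ∈ F.filter (fun l => Pc W s(l.1, l.2.1)) :=
    Multiset.mem_filter.mpr ⟨he₂F, by
      show Pc W s(e₂.1, e₂.2.1)
      rw [hfe₂]; exact Pc_iff.mpr (Or.inl ⟨hvW, hyW⟩)⟩
  have hFW2 : 2 ≤ Multiset.card (F.filter (fun l => Pc W s(l.1, l.2.1))) :=
    pair_le_card hlW he₂W (fun h => hne2 h.symm)
  -- every tree edge crossing M: its M-endpoint is in X, other endpoint in X ∩ W
  have claimE : ∀ e ∈ G.edgeFinset.val, Pc M e →
      ∃ a b, e = s(a, b) ∧ a ∈ M ∧ b ∈ X ∧ b ∈ W := by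
    intro e he hPcM
    obtain ⟨a0, b0, rfl, hadj⟩ := edge_ex G he
    have key : ∀ xx yy, s(xx, yy) = s(a0, b0) → xx ∈ M → yy ∉ M →
        ∃ a b, s(a0, b0) = s(a, b) ∧ a ∈ M ∧ b ∈ X ∧ b ∈ W := by
      intro xx yy hxy hxM hyM'
      have hxX : xx ∈ X := (Finset.mem_sdiff.mp hxM).1
      have hyX' : yy ∈ X := by
        by_contra hyX'
        have h' := hXtree s(a0, b0) he (by
          rw [← hxy]; exact Pc_iff.mpr (Or.inl ⟨hxX, hyX'⟩))
        have h'' : s(xx, yy) = s(v, v₁) := hxy.trans h'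
        rw [Sym2.eq_iff] at h''
        rcases h'' with ⟨h1', _⟩ | ⟨h1', _⟩
        · exact hvM (h1' ▸ hxM)
        · exact hv1M (h1' ▸ hxM)
      have hyW' : yy ∈ W := by
        by_contra hyW'
        exact hyM' (Finset.mem_sdiff.mpr ⟨hyX', hyW'⟩)
      exact ⟨xx, yy, hxy.symm, hxM, hyX', hyW'⟩
    rw [Pc_iff] at hPcM
    rcases hPcM with ⟨h1', h2'⟩ | ⟨h1', h2'⟩
    · exact key a0 b0 rfl h1' h2'
    · exact key b0 a0 Sym2.eq_swap h1' h2'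
  have claimF : ∀ e ∈ F, Pc M s(e.1, e.2.1) →
      ∃ a b, s(e.1, e.2.1) = s(a, b) ∧ a ∈ M ∧ b ∈ X ∧ b ∈ W := by
    intro e he hPcM
    have key : ∀ xx yy, s(xx, yy) = s(e.1, e.2.1) → xx ∈ M → yy ∉ M →
        ∃ a b, s(e.1, e.2.1) = s(a, b) ∧ a ∈ M ∧ b ∈ X ∧ b ∈ W := by
      intro xx yy hxy hxM hyM'
      have hxX : xx ∈ X := (Finset.mem_sdiff.mp hxM).1
      have hyX' : yy ∈ X := by
        by_contra hyX'
        have h' := hXF e he (by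
          rw [← hxy]; exact Pc_iff.mpr (Or.inl ⟨hxX, hyX'⟩))
        have h'' : s(xx, yy) = s(u, v) := by rw [hxy, h']
        rw [Sym2.eq_iff] at h''
        rcases h'' with ⟨h1', _⟩ | ⟨h1', _⟩
        · exact huM (h1' ▸ hxM)
        · exact hvM (h1' ▸ hxM)
      have hyW' : yy ∈ W := by
        by_contra hyW'
        exact hyM' (Finset.mem_sdiff.mpr ⟨hyX', hyW'⟩)
      exact ⟨xx, yy, hxy.symm, hxM, hyX', hyW'⟩
    rw [Pc_iff] at hPcM
    rcases hPcM with ⟨h1', h2'⟩ | ⟨h1', h2'⟩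
    · exact key e.1 e.2.1 rfl h1' h2'
    · exact key e.2.1 e.1 Sym2.eq_swap h1' h2'
  have impE : ∀ e ∈ G.edgeFinset.val, Pc M e → Pc W e := by
    intro e he h
    obtain ⟨a, b, heq, haM, _, hbW⟩ := claimE e he h
    rw [heq]
    exact Pc_iff.mpr (Or.inr ⟨hbW, fun haW => (Finset.mem_sdiff.mp haM).2 haW⟩)
  have impF : ∀ e ∈ F, Pc M s(e.1, e.2.1) → Pc W s(e.1, e.2.1) := by
    intro e he h
    obtain ⟨a, b, heq, haM, _, hbW⟩ := claimF e he h
    rw [heq]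
    exact Pc_iff.mpr (Or.inr ⟨hbW, fun haW => (Finset.mem_sdiff.mp haM).2 haW⟩)
  have hEMle : (G.edgeFinset.val).filter (Pc M) ≤ (G.edgeFinset.val).filter (Pc W) :=
    filter_le_of_imp _ _ _ impE
  have hFMle : F.filter (fun l => Pc M s(l.1, l.2.1)) ≤ F.filter (fun l => Pc W s(l.1, l.2.1)) :=
    filter_le_of_imp _ _ _ impF
  have hlnotM : ¬ Pc M s(u, v) := by
    rw [Pc_iff]
    rintro (⟨h1', _⟩ | ⟨h1', _⟩)
    · exact huM h1'
    · exact hvM h1'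
  have hlMnot : (u, v, t) ∉ F.filter (fun l => Pc M s(l.1, l.2.1)) := by
    intro h
    exact hlnotM (Multiset.of_mem_filter (p := fun l : V × V × ℕ => Pc M s(l.1, l.2.1)) h)
  have hFMle' : F.filter (fun l => Pc M s(l.1, l.2.1))
      ≤ (F.filter (fun l => Pc W s(l.1, l.2.1))).erase (u, v, t) :=
    le_erase_of_notmem hFMle hlMnot
  have hfMcard : Multiset.card (F.filter (fun l => Pc M s(l.1, l.2.1)))
      ≤ Multiset.card (F.filter (fun l => Pc W s(l.1, l.2.1))) - 1 := by
    have h1 := Multiset.card_le_card hFMle'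
    rw [Multiset.card_erase_of_mem hlW, Nat.pred_eq_sub_one] at h1
    exact h1
  by_cases hv1W : v₁ ∈ W
  · -- the harder case: EM = EW, FM = FW.erase l, and the union cut Q has degree ≤ 1
    have heMcard := Multiset.card_le_card hEMle
    have hEMeq : (G.edgeFinset.val).filter (Pc M) = (G.edgeFinset.val).filter (Pc W) :=
      Multiset.eq_of_le_of_card_le hEMle (by omega)
    have hFMeq : F.filter (fun l => Pc M s(l.1, l.2.1))
        = (F.filter (fun l => Pc W s(l.1, l.2.1))).erase (u, v, t) :=
      Multiset.eq_of_le_of_card_le hFMle' (by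
        rw [Multiset.card_erase_of_mem hlW, Nat.pred_eq_sub_one]; omega)
    -- no tree edge crosses Q
    have hEQ : ∀ e ∈ G.edgeFinset.val, ¬ Pc Q e := by
      intro e he hPcQ
      obtain ⟨a0, b0, rfl, hadj⟩ := edge_ex G he
      have key : ∀ xx yy, s(xx, yy) = s(a0, b0) → xx ∈ Q → yy ∉ Q → False := by
        intro xx yy hxy hxQQ hyQQ
        have hyX' : yy ∉ X := fun h => hyQQ (Finset.mem_union_left _ h)
        have hyW' : yy ∉ W := fun h => hyQQ (Finset.mem_union_right _ h)
        by_cases hxX : xx ∈ X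
        · have h' := hXtree s(a0, b0) he (by
            rw [← hxy]; exact Pc_iff.mpr (Or.inl ⟨hxX, hyX'⟩))
          have h'' : s(xx, yy) = s(v, v₁) := hxy.trans h'
          rw [Sym2.eq_iff] at h''
          rcases h'' with ⟨_, h2'⟩ | ⟨_, h2'⟩
          · exact hyW' (h2' ▸ hv1W)
          · exact hyW' (h2' ▸ hvW)
        · have hxW : xx ∈ W := (Finset.mem_union.mp hxQQ).resolve_left hxX
          have hPcW : Pc W s(a0, b0) := by
            rw [← hxy]; exact Pc_iff.mpr (Or.inl ⟨hxW, hyW'⟩)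
          have hmem : s(a0, b0) ∈ (G.edgeFinset.val).filter (Pc M) := by
            rw [hEMeq]; exact Multiset.mem_filter.mpr ⟨he, hPcW⟩
          have hPcM : Pc M s(a0, b0) := Multiset.of_mem_filter hmem
          obtain ⟨a, b, heq, haM, hbX, hbW⟩ := claimE s(a0, b0) he hPcM
          have h'' : s(xx, yy) = s(a, b) := hxy.trans heq
          rw [Sym2.eq_iff] at h''
          rcases h'' with ⟨_, h2'⟩ | ⟨_, h2'⟩
          · exact hyQQ (h2' ▸ Finset.mem_union_right _ hbW)
          · exact hyQQ (h2' ▸ Finset.mem_union_left _ (Finset.mem_sdiff.mp haM).1)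
      rw [Pc_iff] at hPcQ
      rcases hPcQ with ⟨h1', h2'⟩ | ⟨h1', h2'⟩
      · exact key a0 b0 rfl h1' h2'
      · exact key b0 a0 Sym2.eq_swap h1' h2'
    have hEQ0 : Multiset.card ((G.edgeFinset.val).filter (Pc Q)) = 0 := by
      rw [Multiset.filter_eq_nil.mpr hEQ]; rfl
    -- every link crossing Q is l
    have hFQ : ∀ e ∈ F, Pc Q s(e.1, e.2.1) → e = (u, v, t) := by
      intro e he hPcQ
      have key : ∀ xx yy, s(xx, yy) = s(e.1, e.2.1) → xx ∈ Q → yy ∉ Q → e = (u, v, t) := by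
        intro xx yy hxy hxQQ hyQQ
        have hyX' : yy ∉ X := fun h => hyQQ (Finset.mem_union_left _ h)
        have hyW' : yy ∉ W := fun h => hyQQ (Finset.mem_union_right _ h)
        by_cases hxX : xx ∈ X
        · exact hXF e he (by rw [← hxy]; exact Pc_iff.mpr (Or.inl ⟨hxX, hyX'⟩))
        · have hxW : xx ∈ W := (Finset.mem_union.mp hxQQ).resolve_left hxX
          by_cases hel : e = (u, v, t)
          · exact hel
          · exfalso
            have hPcW : Pc W s(e.1, e.2.1) := by
              rw [← hxy]; exact Pc_iff.mpr (Or.inl ⟨hxW, hyW'⟩)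
            have hmemW : e ∈ F.filter (fun l => Pc W s(l.1, l.2.1)) :=
              Multiset.mem_filter.mpr ⟨he, hPcW⟩
            have hmemM : e ∈ F.filter (fun l => Pc M s(l.1, l.2.1)) := by
              rw [hFMeq]
              exact (Multiset.mem_erase_of_ne hel).mpr hmemW
            have hPcM : Pc M s(e.1, e.2.1) :=
              Multiset.of_mem_filter (p := fun l : V × V × ℕ => Pc M s(l.1, l.2.1)) hmemM
            obtain ⟨a, b, heq, haM, hbX, hbW⟩ := claimF e he hPcM
            have h'' : s(xx, yy) = s(a, b) := hxy.trans heq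
            rw [Sym2.eq_iff] at h''
            rcases h'' with ⟨_, h2'⟩ | ⟨_, h2'⟩
            · exact hyQQ (h2' ▸ Finset.mem_union_right _ hbW)
            · exact hyQQ (h2' ▸ Finset.mem_union_left _ (Finset.mem_sdiff.mp haM).1)
      rw [Pc_iff] at hPcQ
      rcases hPcQ with ⟨h1', h2'⟩ | ⟨h1', h2'⟩
      · exact key e.1 e.2.1 rfl h1' h2'
      · exact key e.2.1 e.1 Sym2.eq_swap h1' h2'
    have hFQ1 : Multiset.card (F.filter (fun l => Pc Q s(l.1, l.2.1))) ≤ 1 := by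
      have hrep : F.filter (fun l => Pc Q s(l.1, l.2.1))
          = Multiset.replicate (Multiset.card (F.filter (fun l => Pc Q s(l.1, l.2.1)))) (u, v, t) :=
        Multiset.eq_replicate_card.mpr (fun b hb =>
          hFQ b (Multiset.mem_of_mem_filter hb)
            (Multiset.of_mem_filter (p := fun l : V × V × ℕ => Pc Q s(l.1, l.2.1)) hb))
      have hcle : Multiset.count (u, v, t) (F.filter (fun l => Pc Q s(l.1, l.2.1)))
          ≤ Multiset.count (u, v, t) F :=
        Multiset.count_le_of_le _ (Multiset.filter_le _ _)
      rw [hcl] at hcle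
      conv_lhs at hcle => rw [hrep]
      rw [Multiset.count_replicate_self] at hcle
      exact hcle
    omega
  · -- easy case : v₁ ∉ W, so the tree edge s(v,v₁) crosses W but not M
    have hs1W : s(v, v₁) ∈ (G.edgeFinset.val).filter (Pc W) := by
      exact Multiset.mem_filter.mpr ⟨edge_mem G hadj1, Pc_iff.mpr (Or.inl ⟨hvW, hv1W⟩)⟩
    have hs1M : s(v, v₁) ∉ (G.edgeFinset.val).filter (Pc M) := by
      intro h
      have := Multiset.of_mem_filter h
      rw [Pc_iff] at this
      rcases this with ⟨h1', _⟩ | ⟨h1', _⟩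
      · exact hvM h1'
      · exact hv1M h1'
    have hEMle' : (G.edgeFinset.val).filter (Pc M)
        ≤ ((G.edgeFinset.val).filter (Pc W)).erase s(v, v₁) :=
      le_erase_of_notmem hEMle hs1M
    have h1 := Multiset.card_le_card hEMle'
    rw [Multiset.card_erase_of_mem hs1W, Nat.pred_eq_sub_one] at h1
    have h2 := Multiset.card_le_card hFMle'
    rw [Multiset.card_erase_of_mem hlW, Nat.pred_eq_sub_one] at h2
    have h3 : 1 ≤ Multiset.card ((G.edgeFinset.val).filter (Pc W)) :=
      Multiset.card_pos_iff_exists_mem.mpr ⟨_, hs1W⟩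
    omega


lemma cutDeg_link_cons (a : V × V × ℕ) (s : Multiset (V × V × ℕ)) (W : Finset V) :
    cutDeg (G.edgeFinset.val + (a ::ₘ s).map (fun l => s(l.1, l.2.1))) W
      = (if Pc W s(a.1, a.2.1) then 1 else 0)
        + cutDeg (G.edgeFinset.val + s.map (fun l => s(l.1, l.2.1))) W := by
  rw [Multiset.map_cons, Multiset.add_cons, cutDeg_cons]

lemma card_le_weightsum (F : Multiset (V × V × ℕ)) (h : ∀ l ∈ F, ValidLink p l) :
    Multiset.card F ≤ (F.map (fun l => l.2.2)).sum := by
  induction F using Multiset.induction with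
  | empty => simp
  | cons a s ih =>
    rw [Multiset.map_cons, Multiset.sum_cons, Multiset.card_cons]
    have h1 : 1 ≤ a.2.2 := (h a (Multiset.mem_cons_self a s)).2.1
    have h2 := ih (fun l hl => h l (Multiset.mem_cons_of_mem hl))
    omega

noncomputable def muF (G : SimpleGraph V) [DecidableRel G.Adj]
    (sel : V → G.ConnectedComponent → ℕ → V) (u : V) (l : V × V × ℕ) : ℕ :=
  if l.1 = u then
    (if G.Reachable u l.2.1 then G.dist u l.2.1
     else G.dist l.2.1 (sel u (G.connectedComponentMk l.2.1) l.2.2))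
  else 0

lemma muF_le (sel : V → G.ConnectedComponent → ℕ → V) (u : V) (l : V × V × ℕ) :
    muF G sel u l ≤ Fintype.card V := by
  unfold muF
  split_ifs
  · exact dist_le_card G _ _
  · exact dist_le_card G _ _
  · exact Nat.zero_le _

noncomputable def mval (G : SimpleGraph V) [DecidableRel G.Adj]
    (sel : V → G.ConnectedComponent → ℕ → V) (p : ℕ) (u : V)
    (F : Multiset (V × V × ℕ)) : ℕ :=
  Multiset.card F * (p * Fintype.card V + 1) + (F.map (muF G sel u)).sum

lemma mval_lt_of_card_lt (sel : V → G.ConnectedComponent → ℕ → V) (u : V)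
    {F F' : Multiset (V × V × ℕ)} (hcard : Multiset.card F' ≤ p)
    (hlt : Multiset.card F' < Multiset.card F) :
    mval G sel p u F' < mval G sel p u F := by
  unfold mval
  have h1 : (F'.map (muF G sel u)).sum ≤ Multiset.card F' * Fintype.card V := by
    have := Multiset.sum_map_le_sum_map (s := F') (muF G sel u) (fun _ => Fintype.card V)
      (fun l _ => muF_le G sel u l)
    rw [Multiset.map_const', Multiset.sum_replicate, smul_eq_mul] at this
    exact this
  have h2 : Multiset.card F' * Fintype.card V ≤ p * Fintype.card V :=
    Nat.mul_le_mul_right _ hcard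
  calc Multiset.card F' * (p * Fintype.card V + 1) + (F'.map (muF G sel u)).sum
      ≤ Multiset.card F' * (p * Fintype.card V + 1) + p * Fintype.card V := by omega
    _ < (Multiset.card F' + 1) * (p * Fintype.card V + 1) := by ring_nf; omega
    _ ≤ Multiset.card F * (p * Fintype.card V + 1) := Nat.mul_le_mul_right _ hlt
    _ ≤ _ := Nat.le_add_right _ _

lemma mval_cons (sel : V → G.ConnectedComponent → ℕ → V) (u : V)
    (a : V × V × ℕ) (s : Multiset (V × V × ℕ)) :
    mval G sel p u (a ::ₘ s) = (p * Fintype.card V + 1) + muF G sel u a + mval G sel p u s := by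
  unfold mval
  rw [Multiset.card_cons, Multiset.map_cons, Multiset.sum_cons]
  ring


lemma solCost_cons (c : V → V → ℕ → ℝ≥0∞) (a : V × V × ℕ) (s : Multiset (V × V × ℕ)) :
    solCost c (a ::ₘ s) = c a.1 a.2.1 a.2.2 + solCost c s := by
  simp [solCost]

lemma do_step (c : V → V → ℕ → ℝ≥0∞) (hsymm : ∀ a b t, c a b t = c b a t)
    (sel : V → G.ConnectedComponent → ℕ → V)
    (hmetric : IsMetricForestInstance G sel p c) (u : V)
    (F : Multiset (V × V × ℕ)) (hF : FeasibleF G p F)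
    (hnorm : ∀ l ∈ F, l.2.1 ≠ u)
    {v v₁ : V} {t : ℕ}
    (hlF : (u, v, t) ∈ F) (hdeg2 : G.degree v = 2) (hadj : G.Adj v v₁)
    (hcost : v₁ ≠ u → c u v₁ t ≤ c u v t)
    (hmeas : v₁ ≠ u → muF G sel u (u, v₁, t) < muF G sel u (u, v, t)) :
    ∃ F₂, FeasibleF G p F₂ ∧ solCost c F₂ ≤ solCost c F ∧
      (∀ l ∈ F₂, l.2.1 ≠ u) ∧ mval G sel p u F₂ < mval G sel p u F := by
  classical
  obtain ⟨v₂, hadj2, h21, hnbr⟩ := deg_two G hdeg2 hadj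
  have hval := hF.1 _ hlF
  have huv : u ≠ v := hval.1
  have ht1 : 1 ≤ t := hval.2.1
  have htp : t ≤ p := hval.2.2
  have hcardF : Multiset.card F ≤ p :=
    le_trans (card_le_weightsum p F hF.1) hF.2.1
  by_cases hX : ∃ X : Finset V, v ∈ X ∧ u ∉ X ∧ v₁ ∉ X ∧
      cutDeg (G.edgeFinset.val + F.map (fun l => s(l.1, l.2.1))) X ≤ 2
  · -- merge case
    obtain ⟨X, hvX, huX, hv1X, hXcut⟩ := hX
    obtain ⟨e₂, y, t₂, he₂F, hne2, horient, hyX, hyu, hyv, hXtree, hXF, hcl⟩ :=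
      Xstruct G p F hF hlF hadj hadj2 h21 hnbr hvX huX hv1X hXcut
    have hfe₂ : s(e₂.1, e₂.2.1) = s(v, y) := by
      rcases horient with rfl | rfl
      · rfl
      · exact Sym2.eq_swap
    have hval₂ := hF.1 _ he₂F
    have he₂e : e₂ ∈ F.erase (u, v, t) := (Multiset.mem_erase_of_ne hne2).mpr he₂F
    have hdec : F = (u, v, t) ::ₘ e₂ ::ₘ ((F.erase (u, v, t)).erase e₂) := by
      rw [Multiset.cons_erase he₂e, Multiset.cons_erase hlF]
    have hsumF : (F.map (fun l => l.2.2)).sum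
        = t + (e₂.2.2 + (((F.erase (u, v, t)).erase e₂).map (fun l => l.2.2)).sum) := by
      conv_lhs => rw [hdec]
      rw [Multiset.map_cons, Multiset.sum_cons, Multiset.map_cons, Multiset.sum_cons]
    have hsp := hF.2.1
    have ht₃p : t + e₂.2.2 ≤ p := by omega
    have huy : u ≠ y := Ne.symm hyu
    have hcost₂ : c v y e₂.2.2 = c e₂.1 e₂.2.1 e₂.2.2 := by
      rcases horient with rfl | rfl
      · rfl
      · exact hsymm v y _
    have htri : c u y (t + e₂.2.2) ≤ c u v t + c v y e₂.2.2 :=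
      hmetric.2 u v y t e₂.2.2 (t + e₂.2.2) huv (Ne.symm hyv) huy ht1 hval₂.2.1 ht₃p le_rfl
    refine ⟨(u, y, t + e₂.2.2) ::ₘ ((F.erase (u, v, t)).erase e₂), ?_, ?_, ?_, ?_⟩
    · -- feasibility
      refine ⟨?_, ?_, hF.2.2.1, ?_⟩
      · intro l' hl'
        rcases Multiset.mem_cons.mp hl' with rfl | h
        · exact ⟨huy, by show 1 ≤ t + e₂.2.2; omega, by show t + e₂.2.2 ≤ p; omega⟩
        · exact hF.1 _ (Multiset.mem_of_mem_erase (Multiset.mem_of_mem_erase h))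
      · rw [Multiset.map_cons, Multiset.sum_cons]
        show t + e₂.2.2 + _ ≤ p
        omega
      · intro W hWne hWuniv
        have hbase := hF.2.2.2 W hWne hWuniv
        have harithF : cutDeg (G.edgeFinset.val + F.map (fun l => s(l.1, l.2.1))) W
            = (if Pc W s(u, v) then 1 else 0) + ((if Pc W s(e₂.1, e₂.2.1) then 1 else 0)
              + cutDeg (G.edgeFinset.val
                  + ((F.erase (u, v, t)).erase e₂).map (fun l => s(l.1, l.2.1))) W) := by
          conv_lhs => rw [hdec]
          rw [cutDeg_link_cons, cutDeg_link_cons]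
        have harith2 : cutDeg (G.edgeFinset.val
              + ((u, y, t + e₂.2.2) ::ₘ ((F.erase (u, v, t)).erase e₂)).map
                  (fun l => s(l.1, l.2.1))) W
            = (if Pc W s(u, y) then 1 else 0)
              + cutDeg (G.edgeFinset.val
                  + ((F.erase (u, v, t)).erase e₂).map (fun l => s(l.1, l.2.1))) W := by
          rw [cutDeg_link_cons]
        rw [harith2]
        rw [harithF] at hbase
        have hPuv : Pc W s(u, v) ↔ ((u ∈ W ∧ v ∉ W) ∨ (v ∈ W ∧ u ∉ W)) := Pc_iff
        have hPvy : Pc W s(e₂.1, e₂.2.1) ↔ ((v ∈ W ∧ y ∉ W) ∨ (y ∈ W ∧ v ∉ W)) := by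
          rw [hfe₂]; exact Pc_iff
        have hPuy : Pc W s(u, y) ↔ ((u ∈ W ∧ y ∉ W) ∨ (y ∈ W ∧ u ∉ W)) := Pc_iff
        by_cases h1 : u ∈ W <;> by_cases h2 : v ∈ W <;> by_cases h3 : y ∈ W
        · -- TTT
          rw [if_neg (fun hc => by
            rcases hPuy.mp hc with ⟨_, hc2⟩ | ⟨_, hc2⟩
            · exact hc2 h3
            · exact hc2 h1)]
          rw [if_neg (fun hc => by
            rcases hPuv.mp hc with ⟨_, hc2⟩ | ⟨_, hc2⟩
            · exact hc2 h2
            · exact hc2 h1),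
            if_neg (fun hc => by
              rcases hPvy.mp hc with ⟨_, hc2⟩ | ⟨_, hc2⟩
              · exact hc2 h3
              · exact hc2 h2)] at hbase
          omega
        · -- TTF
          rw [if_pos (hPuy.mpr (Or.inl ⟨h1, h3⟩))]
          rw [if_neg (fun hc => by
            rcases hPuv.mp hc with ⟨_, hc2⟩ | ⟨_, hc2⟩
            · exact hc2 h2
            · exact hc2 h1),
            if_pos (hPvy.mpr (Or.inl ⟨h2, h3⟩))] at hbase
          omega
        · -- TFT : deadly, use complement
          by_contra hlt
          push_neg at hlt
          have h6 : cutDeg (G.edgeFinset.val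
              + ((F.erase (u, v, t)).erase e₂).map (fun l => s(l.1, l.2.1))) W ≤ 1 := by
            rw [if_neg (fun hc => by
              rcases hPuy.mp hc with ⟨_, hc2⟩ | ⟨_, hc2⟩
              · exact hc2 h3
              · exact hc2 h1)] at hlt
            omega
          have h7 : cutDeg (G.edgeFinset.val + F.map (fun l => s(l.1, l.2.1))) W ≤ 3 := by
            rw [harithF]
            rw [if_pos (hPuv.mpr (Or.inl ⟨h1, h2⟩)), if_pos (hPvy.mpr (Or.inr ⟨h3, h2⟩))]
            omega
          have h8 : cutDeg (G.edgeFinset.val + F.map (fun l => s(l.1, l.2.1))) Wᶜ ≤ 3 := by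
            rw [cutDeg_compl]; exact h7
          exact no_deficient G p F hF hlF hcl he₂F hne2 hfe₂ hadj hvX huX hv1X hyX hXtree hXF
            (Finset.mem_compl.mpr h2) (fun hc => (Finset.mem_compl.mp hc) h1)
            (fun hc => (Finset.mem_compl.mp hc) h3) h8
        · -- TFF
          rw [if_pos (hPuy.mpr (Or.inl ⟨h1, h3⟩))]
          rw [if_pos (hPuv.mpr (Or.inl ⟨h1, h2⟩)),
            if_neg (fun hc => by
              rcases hPvy.mp hc with ⟨hc2, _⟩ | ⟨hc2, _⟩
              · exact h2 hc2
              · exact h3 hc2)] at hbase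
          omega
        · -- FTT
          rw [if_pos (hPuy.mpr (Or.inr ⟨h3, h1⟩))]
          rw [if_pos (hPuv.mpr (Or.inr ⟨h2, h1⟩)),
            if_neg (fun hc => by
              rcases hPvy.mp hc with ⟨_, hc2⟩ | ⟨_, hc2⟩
              · exact hc2 h3
              · exact hc2 h2)] at hbase
          omega
        · -- FTF : deadly
          by_contra hlt
          push_neg at hlt
          have h6 : cutDeg (G.edgeFinset.val
              + ((F.erase (u, v, t)).erase e₂).map (fun l => s(l.1, l.2.1))) W ≤ 1 := by
            rw [if_neg (fun hc => by
              rcases hPuy.mp hc with ⟨hc2, _⟩ | ⟨hc2, _⟩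
              · exact h1 hc2
              · exact h3 hc2)] at hlt
            omega
          have h7 : cutDeg (G.edgeFinset.val + F.map (fun l => s(l.1, l.2.1))) W ≤ 3 := by
            rw [harithF]
            rw [if_pos (hPuv.mpr (Or.inr ⟨h2, h1⟩)), if_pos (hPvy.mpr (Or.inl ⟨h2, h3⟩))]
            omega
          exact no_deficient G p F hF hlF hcl he₂F hne2 hfe₂ hadj hvX huX hv1X hyX hXtree hXF
            h2 h1 h3 h7
        · -- FFT
          rw [if_pos (hPuy.mpr (Or.inr ⟨h3, h1⟩))]
          rw [if_neg (fun hc => by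
            rcases hPuv.mp hc with ⟨hc2, _⟩ | ⟨hc2, _⟩
            · exact h1 hc2
            · exact h2 hc2),
            if_pos (hPvy.mpr (Or.inr ⟨h3, h2⟩))] at hbase
          omega
        · -- FFF
          rw [if_neg (fun hc => by
            rcases hPuy.mp hc with ⟨hc2, _⟩ | ⟨hc2, _⟩
            · exact h1 hc2
            · exact h3 hc2)]
          rw [if_neg (fun hc => by
            rcases hPuv.mp hc with ⟨hc2, _⟩ | ⟨hc2, _⟩
            · exact h1 hc2
            · exact h2 hc2),
            if_neg (fun hc => by
              rcases hPvy.mp hc with ⟨hc2, _⟩ | ⟨hc2, _⟩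
              · exact h2 hc2
              · exact h3 hc2)] at hbase
          omega
    · -- cost
      have hcF : solCost c F = c u v t + (c e₂.1 e₂.2.1 e₂.2.2
          + solCost c ((F.erase (u, v, t)).erase e₂)) := by
        conv_lhs => rw [hdec]
        rw [solCost_cons, solCost_cons]
      rw [hcF, solCost_cons]
      calc c u y (t + e₂.2.2) + solCost c ((F.erase (u, v, t)).erase e₂)
          ≤ (c u v t + c v y e₂.2.2) + solCost c ((F.erase (u, v, t)).erase e₂) := by
            exact add_le_add_left htri _
        _ = c u v t + (c e₂.1 e₂.2.1 e₂.2.2 + solCost c ((F.erase (u, v, t)).erase e₂)) := by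
            rw [hcost₂, add_assoc]
    · -- normalized
      intro l' hl'
      rcases Multiset.mem_cons.mp hl' with rfl | h
      · exact hyu
      · exact hnorm _ (Multiset.mem_of_mem_erase (Multiset.mem_of_mem_erase h))
    · -- measure
      have hc2 : Multiset.card ((u, y, t + e₂.2.2) ::ₘ ((F.erase (u, v, t)).erase e₂))
          < Multiset.card F := by
        conv_rhs => rw [hdec]
        rw [Multiset.card_cons, Multiset.card_cons, Multiset.card_cons]
        omega
      exact mval_lt_of_card_lt G p sel u (le_trans (le_of_lt hc2) hcardF) hc2
  · -- shrink / delete case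
    have hX' : ∀ X : Finset V, v ∈ X → u ∉ X → v₁ ∉ X →
        3 ≤ cutDeg (G.edgeFinset.val + F.map (fun l => s(l.1, l.2.1))) X := by
      intro X h1' h2' h3'
      by_contra hc
      exact hX ⟨X, h1', h2', h3', by omega⟩
    have hdecF : F = (u, v, t) ::ₘ F.erase (u, v, t) := (Multiset.cons_erase hlF).symm
    have hsumF : (F.map (fun l => l.2.2)).sum
        = t + ((F.erase (u, v, t)).map (fun l => l.2.2)).sum := by
      conv_lhs => rw [hdecF]
      rw [Multiset.map_cons, Multiset.sum_cons]
    have hsp := hF.2.1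
    by_cases hv1u : v₁ = u
    · -- delete
      refine ⟨F.erase (u, v, t), ?_, ?_, ?_, ?_⟩
      · refine ⟨fun l' hl' => hF.1 _ (Multiset.mem_of_mem_erase hl'), by omega, hF.2.2.1, ?_⟩
        intro W hWne hWuniv
        have hbase := hF.2.2.2 W hWne hWuniv
        have harithF : cutDeg (G.edgeFinset.val + F.map (fun l => s(l.1, l.2.1))) W
            = (if Pc W s(u, v) then 1 else 0)
              + cutDeg (G.edgeFinset.val + (F.erase (u, v, t)).map (fun l => s(l.1, l.2.1))) W := by
          conv_lhs => rw [hdecF]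
          rw [cutDeg_link_cons]
        by_cases hP : Pc W s(u, v)
        · rcases Pc_iff.mp hP with ⟨huW, hvW⟩ | ⟨hvW, huW⟩
          · have h3 := hX' Wᶜ (Finset.mem_compl.mpr hvW)
              (fun hc => (Finset.mem_compl.mp hc) huW)
              (fun hc => (Finset.mem_compl.mp hc) (hv1u ▸ huW))
            rw [cutDeg_compl, harithF, if_pos hP] at h3
            omega
          · have h3 := hX' W hvW huW (fun hc => huW (hv1u ▸ hc))
            rw [harithF, if_pos hP] at h3
            omega
        · rw [harithF, if_neg hP] at hbase
          omega
      · have hcF : solCost c F = c u v t + solCost c (F.erase (u, v, t)) := by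
          conv_lhs => rw [hdecF]
          rw [solCost_cons]
        rw [hcF]
        exact le_add_self
      · exact fun l' hl' => hnorm _ (Multiset.mem_of_mem_erase hl')
      · have hc2 : Multiset.card (F.erase (u, v, t)) < Multiset.card F := by
          conv_rhs => rw [hdecF]
          rw [Multiset.card_cons]
          omega
        exact mval_lt_of_card_lt G p sel u (le_trans (le_of_lt hc2) hcardF) hc2
    · -- shrink
      refine ⟨(u, v₁, t) ::ₘ F.erase (u, v, t), ?_, ?_, ?_, ?_⟩
      · refine ⟨?_, ?_, hF.2.2.1, ?_⟩
        · intro l' hl'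
          rcases Multiset.mem_cons.mp hl' with rfl | h
          · exact ⟨fun h => hv1u h.symm, ht1, htp⟩
          · exact hF.1 _ (Multiset.mem_of_mem_erase h)
        · rw [Multiset.map_cons, Multiset.sum_cons]
          show t + _ ≤ p
          omega
        · intro W hWne hWuniv
          have hbase := hF.2.2.2 W hWne hWuniv
          have harithF : cutDeg (G.edgeFinset.val + F.map (fun l => s(l.1, l.2.1))) W
              = (if Pc W s(u, v) then 1 else 0)
                + cutDeg (G.edgeFinset.val + (F.erase (u, v, t)).map (fun l => s(l.1, l.2.1))) W := by
            conv_lhs => rw [hdecF]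
            rw [cutDeg_link_cons]
          have harith2 : cutDeg (G.edgeFinset.val
                + ((u, v₁, t) ::ₘ F.erase (u, v, t)).map (fun l => s(l.1, l.2.1))) W
              = (if Pc W s(u, v₁) then 1 else 0)
                + cutDeg (G.edgeFinset.val + (F.erase (u, v, t)).map (fun l => s(l.1, l.2.1))) W := by
            rw [cutDeg_link_cons]
          rw [harith2]
          rw [harithF] at hbase
          by_cases hP : Pc W s(u, v)
          · rw [if_pos hP] at hbase
            by_cases hP2 : Pc W s(u, v₁)
            · rw [if_pos hP2]
              omega
            · rw [if_neg hP2]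
              rcases Pc_iff.mp hP with ⟨huW, hvW⟩ | ⟨hvW, huW⟩
              · have hv1W : v₁ ∈ W := by
                  by_contra hc
                  exact hP2 (Pc_iff.mpr (Or.inl ⟨huW, hc⟩))
                have h3 := hX' Wᶜ (Finset.mem_compl.mpr hvW)
                  (fun hc => (Finset.mem_compl.mp hc) huW)
                  (fun hc => (Finset.mem_compl.mp hc) hv1W)
                rw [cutDeg_compl, harithF, if_pos hP] at h3
                omega
              · have hv1W : v₁ ∉ W := by
                  intro hc
                  exact hP2 (Pc_iff.mpr (Or.inr ⟨hc, huW⟩))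
                have h3 := hX' W hvW huW hv1W
                rw [harithF, if_pos hP] at h3
                omega
          · rw [if_neg hP] at hbase
            omega
      · have hcF : solCost c F = c u v t + solCost c (F.erase (u, v, t)) := by
          conv_lhs => rw [hdecF]
          rw [solCost_cons]
        rw [hcF, solCost_cons]
        exact add_le_add_left (hcost hv1u) _
      · intro l' hl'
        rcases Multiset.mem_cons.mp hl' with rfl | h
        · exact hv1u
        · exact hnorm _ (Multiset.mem_of_mem_erase h)
      · conv_rhs => rw [hdecF]
        rw [mval_cons, mval_cons]
        have := hmeas hv1u
        omega


lemma muF_eval (sel : V → G.ConnectedComponent → ℕ → V) (u b : V) (tt : ℕ) :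
    muF G sel u (u, b, tt)
      = if G.Reachable u b then G.dist u b
        else G.dist b (sel u (G.connectedComponentMk b) tt) := by
  simp [muF]

lemma main_rec (c : V → V → ℕ → ℝ≥0∞) (hsymm : ∀ a b t, c a b t = c b a t)
    (sel : V → G.ConnectedComponent → ℕ → V)
    (hsel_mem : ∀ (a : V) (K : G.ConnectedComponent) (t : ℕ),
      G.connectedComponentMk a ≠ K → G.connectedComponentMk (sel a K t) = K)
    (hmetric : IsMetricForestInstance G sel p c)
    (u : V) (hu : G.degree u = 1) :
    ∀ n : ℕ, ∀ F, FeasibleF G p F →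
      (∀ F', FeasibleF G p F' → solCost c F ≤ solCost c F') →
      (∀ l ∈ F, l.2.1 ≠ u) → mval G sel p u F ≤ n →
      ∃ Fg, FeasibleF G p Fg ∧ (∀ F', FeasibleF G p F' → solCost c Fg ≤ solCost c F') ∧
        ∀ l ∈ Fg, (l.1 = u → (G.degree l.2.1 ≠ 2 ∨ ∃ (K : G.ConnectedComponent) (t : ℕ),
            1 ≤ t ∧ t ≤ p ∧ K ≠ G.connectedComponentMk u ∧ l.2.1 = sel u K t)) ∧
          (l.2.1 = u → (G.degree l.1 ≠ 2 ∨ ∃ (K : G.ConnectedComponent) (t : ℕ),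
            1 ≤ t ∧ t ≤ p ∧ K ≠ G.connectedComponentMk u ∧ l.1 = sel u K t)) := by
  intro n
  induction n using Nat.strong_induction_on with
  | _ n ih =>
    intro F hF hopt hnorm hm
    by_cases hbad : ∃ l ∈ F, l.1 = u ∧ G.degree l.2.1 = 2 ∧
        ¬∃ (K : G.ConnectedComponent) (t' : ℕ), 1 ≤ t' ∧ t' ≤ p ∧
          K ≠ G.connectedComponentMk u ∧ l.2.1 = sel u K t'
    · obtain ⟨⟨a, v, t⟩, hl0F, hl0u, hdeg2, hnotsel⟩ := hbad
      have ha : a = u := hl0u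
      simp only at hdeg2 hnotsel
      rw [ha] at hl0F
      have hval := hF.1 _ hl0F
      have huv : u ≠ v := hval.1
      have hstep : ∃ F₂, FeasibleF G p F₂ ∧ solCost c F₂ ≤ solCost c F ∧
          (∀ l ∈ F₂, l.2.1 ≠ u) ∧ mval G sel p u F₂ < mval G sel p u F := by
        by_cases hreach : G.Reachable u v
        · -- internal link
          obtain ⟨v₁, hadj, hdistlt, hOnP⟩ := exists_step G hreach.symm (fun h => huv h.symm)
          have hcost : v₁ ≠ u → c u v₁ t ≤ c u v t := by
            intro hne
            refine hmetric.1 (u, v, t) (u, v₁, t) hval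
              ⟨fun h => hne h.symm, hval.2.1, hval.2.2⟩ ?_
            refine Or.inr (Or.inl ⟨hreach, hreach.trans hadj.reachable, Reachable.refl u,
              le_rfl, ?_⟩)
            exact fun ed h => onPath_symm G (hOnP ed (onPath_symm G h))
          have hmeas : v₁ ≠ u → muF G sel u (u, v₁, t) < muF G sel u (u, v, t) := by
            intro _
            rw [muF_eval, muF_eval, if_pos (hreach.trans hadj.reachable), if_pos hreach]
            rw [SimpleGraph.dist_comm (u := u) (v := v₁), SimpleGraph.dist_comm (u := u) (v := v)]
            exact hdistlt
          exact do_step G p c hsymm sel hmetric u F hF hnorm hl0F hdeg2 hadj hcost hmeas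
        · -- external link
          have hKne : G.connectedComponentMk u ≠ G.connectedComponentMk v :=
            fun h => hreach (SimpleGraph.ConnectedComponent.eq.mp h)
          have hs0K := hsel_mem u (G.connectedComponentMk v) t hKne
          have hreach_vs : G.Reachable v (sel u (G.connectedComponentMk v) t) :=
            (SimpleGraph.ConnectedComponent.eq.mp hs0K).symm
          have hvs0 : v ≠ sel u (G.connectedComponentMk v) t := by
            intro h
            exact hnotsel ⟨G.connectedComponentMk v, t, hval.2.1, hval.2.2, Ne.symm hKne, h⟩
          obtain ⟨v₁, hadj, hdistlt, hOnP⟩ := exists_step G hreach_vs hvs0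
          have hv1u : v₁ ≠ u := by
            intro h
            subst h
            exact hreach hadj.reachable.symm
          have hcost : v₁ ≠ u → c u v₁ t ≤ c u v t := by
            intro _
            refine hmetric.1 (u, v, t) (u, v₁, t) hval
              ⟨fun h => hv1u h.symm, hval.2.1, hval.2.2⟩ ?_
            exact Or.inr (Or.inr ⟨rfl, hu, hreach, hadj.reachable, le_rfl, hOnP⟩)
          have hmeas : v₁ ≠ u → muF G sel u (u, v₁, t) < muF G sel u (u, v, t) := by
            intro _
            rw [muF_eval, muF_eval]
            have hnr1 : ¬ G.Reachable u v₁ := fun h => hreach (h.trans hadj.reachable.symm)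
            rw [if_neg hnr1, if_neg hreach]
            have hmk : G.connectedComponentMk v₁ = G.connectedComponentMk v :=
              SimpleGraph.ConnectedComponent.eq.mpr hadj.reachable.symm
            rw [hmk]
            exact hdistlt
          exact do_step G p c hsymm sel hmetric u F hF hnorm hl0F hdeg2 hadj hcost hmeas
      obtain ⟨F₂, hF₂, hc₂, hn₂, hm₂⟩ := hstep
      exact ih (mval G sel p u F₂) (by omega) F₂ hF₂
        (fun F' hF' => le_trans hc₂ (hopt F' hF')) hn₂ le_rfl
    · refine ⟨F, hF, hopt, ?_⟩
      intro l hl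
      constructor
      · intro hl1
        by_cases hdeg : G.degree l.2.1 = 2
        · right
          by_contra hns
          exact hbad ⟨l, hl, hl1, hdeg, hns⟩
        · exact Or.inl hdeg
      · intro hl2
        exact absurd hl2 (hnorm l hl)


lemma norm_step (c : V → V → ℕ → ℝ≥0∞) (hsymm : ∀ a b t, c a b t = c b a t) (u : V)
    (F : Multiset (V × V × ℕ)) (hF : FeasibleF G p F) :
    ∃ Fn, FeasibleF G p Fn ∧ solCost c Fn = solCost c F ∧ ∀ l ∈ Fn, l.2.1 ≠ u := by
  classical
  refine ⟨F.map (fun l => if l.2.1 = u then (u, l.1, l.2.2) else l), ?_, ?_, ?_⟩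
  · refine ⟨?_, ?_, ?_⟩
    · intro l' hl'
      obtain ⟨l, hl, rfl⟩ := Multiset.mem_map.mp hl'
      have hv := hF.1 l hl
      split_ifs with h
      · exact ⟨fun hh => hv.1 (hh.symm.trans h.symm), hv.2.1, hv.2.2⟩
      · exact hv
    · have : (F.map (fun l => if l.2.1 = u then (u, l.1, l.2.2) else l)).map
          (fun l => l.2.2) = F.map (fun l => l.2.2) := by
        rw [Multiset.map_map]
        refine Multiset.map_congr rfl ?_
        intro l _
        simp only [Function.comp_apply]
        split_ifs <;> rfl
      rw [this]
      exact hF.2.1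
    · have : (F.map (fun l => if l.2.1 = u then (u, l.1, l.2.2) else l)).map
          (fun l => s(l.1, l.2.1)) = F.map (fun l => s(l.1, l.2.1)) := by
        rw [Multiset.map_map]
        refine Multiset.map_congr rfl ?_
        intro l _
        simp only [Function.comp_apply]
        split_ifs with h
        · show s(u, l.1) = s(l.1, l.2.1)
          rw [h]
          exact Sym2.eq_swap
        · rfl
      rw [this]
      exact hF.2.2
  · show ((F.map fun l => if l.2.1 = u then (u, l.1, l.2.2) else l).map
      (fun l => c l.1 l.2.1 l.2.2)).sum = _
    rw [Multiset.map_map]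
    congr 1
    refine Multiset.map_congr rfl ?_
    intro l _
    simp only [Function.comp_apply]
    split_ifs with h
    · show c u l.1 l.2.2 = c l.1 l.2.1 l.2.2
      rw [h]
      exact hsymm u l.1 l.2.2
    · rfl
  · intro l' hl'
    obtain ⟨l, hl, rfl⟩ := Multiset.mem_map.mp hl'
    have hv := hF.1 l hl
    split_ifs with h
    · show l.1 ≠ u
      exact fun hh => hv.1 (hh.trans h.symm)
    · exact h

lemma exists_opt (c : V → V → ℕ → ℝ≥0∞)
    (hfeas : ∃ F : Multiset (V × V × ℕ), FeasibleF G p F) :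
    ∃ Fopt, FeasibleF G p Fopt ∧
      ∀ F', FeasibleF G p F' → solCost c Fopt ≤ solCost c F' := by
  classical
  set Λ : Finset (V × V × ℕ) := Finset.univ ×ˢ Finset.univ ×ˢ Finset.range (p + 1) with hΛ
  set A : Finset (Multiset (V × V × ℕ)) := ((p • Λ.val).powerset).toFinset with hA
  have hsub : ∀ F, FeasibleF G p F → F ∈ A := by
    intro F hF
    rw [hA, Multiset.mem_toFinset, Multiset.mem_powerset, Multiset.le_iff_count]
    intro x
    by_cases hx : x ∈ F
    · have hxv := hF.1 x hx
      have hxΛ : x ∈ Λ := by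
        rw [hΛ]
        refine Finset.mem_product.mpr ⟨Finset.mem_univ _,
          Finset.mem_product.mpr ⟨Finset.mem_univ _, ?_⟩⟩
        exact Finset.mem_range.mpr (by have := hxv.2.2; omega)
      have h1 : Multiset.count x F ≤ p :=
        le_trans (Multiset.count_le_card x F)
          (le_trans (card_le_weightsum p F hF.1) hF.2.1)
      rw [Multiset.count_nsmul]
      have h2 : Multiset.count x Λ.val = 1 :=
        Multiset.count_eq_one_of_mem Λ.nodup (Finset.mem_val.mpr hxΛ)
      rw [h2, mul_one]
      exact h1
    · rw [Multiset.count_eq_zero_of_notMem hx]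
      exact Nat.zero_le _
  obtain ⟨F0, hF0⟩ := hfeas
  have hne : (A.filter (fun F => FeasibleF G p F)).Nonempty :=
    ⟨F0, Finset.mem_filter.mpr ⟨hsub F0 hF0, hF0⟩⟩
  obtain ⟨Fopt, hFopt, hmin⟩ := Finset.exists_min_image _ (solCost c) hne
  exact ⟨Fopt, (Finset.mem_filter.mp hFopt).2,
    fun F' hF' => hmin F' (Finset.mem_filter.mpr ⟨hsub F' hF', hF'⟩)⟩

end FAPmain

/-- Let `(V, E)` be a forest with at least two components, equipped with a metric
weighted link instance with parameter `p` (with respect to a fixed choice of the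
selector nodes), and let `u` be a leaf.  If a feasible solution exists, then there is
an optimal feasible solution `F` such that every link of `F` incident to `u` has its
other endpoint in `R ∪ S_u`, where `R` is the set of nodes of degree `≠ 2` and `S_u`
is the set of selector nodes of `u`. -/
theorem exists_optimal_leaf_links_to_corners_or_selectors
    {V : Type*} [Fintype V] [DecidableEq V]
    (G : SimpleGraph V) [DecidableRel G.Adj] (hforest : G.IsAcyclic)
    (p : ℕ) (c : V → V → ℕ → ℝ≥0∞) (hsymm : ∀ a b t, c a b t = c b a t)
    (sel : V → G.ConnectedComponent → ℕ → V)
    (hsel_mem : ∀ (a : V) (K : G.ConnectedComponent) (t : ℕ),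
      G.connectedComponentMk a ≠ K → G.connectedComponentMk (sel a K t) = K)
    (hsel_min : ∀ (a : V) (K : G.ConnectedComponent) (t : ℕ), G.degree a = 1 →
      G.connectedComponentMk a ≠ K → 1 ≤ t → t ≤ p →
      ∃ t₀, 1 ≤ t₀ ∧ t₀ ≤ t ∧ ∀ (z : V) (t' : ℕ), G.connectedComponentMk z = K →
        1 ≤ t' → t' ≤ t → c a (sel a K t) t₀ ≤ c a z t')
    (hmetric : IsMetricForestInstance G sel p c)
    (u : V) (hu : G.degree u = 1) (hr : ∃ w : V, ¬ G.Reachable u w)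
    (hfeas : ∃ F : Multiset (V × V × ℕ), FeasibleF G p F) :
    ∃ F : Multiset (V × V × ℕ), FeasibleF G p F ∧
      (∀ F' : Multiset (V × V × ℕ), FeasibleF G p F' → solCost c F ≤ solCost c F') ∧
      ∀ l ∈ F,
        (l.1 = u → (G.degree l.2.1 ≠ 2 ∨ ∃ (K : G.ConnectedComponent) (t : ℕ),
          1 ≤ t ∧ t ≤ p ∧ K ≠ G.connectedComponentMk u ∧ l.2.1 = sel u K t)) ∧
        (l.2.1 = u → (G.degree l.1 ≠ 2 ∨ ∃ (K : G.ConnectedComponent) (t : ℕ),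
          1 ≤ t ∧ t ≤ p ∧ K ≠ G.connectedComponentMk u ∧ l.1 = sel u K t)) := by
  obtain ⟨Fopt, hFopt, hmin⟩ := exists_opt G p c hfeas
  obtain ⟨Fn, hFn, hcFn, hnorm⟩ := norm_step G p c hsymm u Fopt hFopt
  exact main_rec G p c hsymm sel hsel_mem hmetric u hu (mval G sel p u Fn) Fn hFn
    (fun F' hF' => hcFn ▸ hmin F' hF') hnorm le_rfl
end
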